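/- arXiv:1109.3318 — 3 statements merged into one kernel-verified Lean document; each statement's English description precedes it below -/
import Mathlib

section
/- Consider a sequence X(t) of matrices satisfying ‖X(t+1)‖ ≤ (1 + K₁ a(t))‖X(t)‖ + a(t)η(t) for all t ≥ 1, where K₁ > 0 is a constant, a(t) ∈ [0,1] with Σ_t a(t)² < ∞, and the η(t) ≥ 0 are i.i.d. random variables with finite variance. Then there exist a positive constant K (independent of t) and an almost surely finite random variable M such that, for all t > 0, ‖X(t+1)‖ ≤ e^{K Σ_{s=1}^{t} a(s)} · (‖X(1)‖ + M) almost surely. -/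
open MeasureTheory ProbabilityTheory Finset

/-- **A priori growth bound (Lemma on the update equation).** Suppose the random matrices
`X(t)` satisfy `‖X(t+1)‖ ≤ (1 + K₁ a(t)) ‖X(t)‖ + a(t) η(t)` for all `t ≥ 1`, where
`K₁ > 0`, `a(t) ∈ [0,1]` with `∑ a(t)² < ∞`, and the `η(t) ≥ 0` are i.i.d. with finite
variance.  Then there are a constant `K > 0` and an almost surely finite random variable
`M ≥ 0` such that almost surely, for all `t > 0`,
`‖X(t+1)‖ ≤ e^{K ∑_{s=1}^t a(s)} (‖X(1)‖ + M)`. -/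
theorem stmt_12 {Ω : Type*} [MeasureSpace Ω] [IsProbabilityMeasure (ℙ : Measure Ω)]
    {n m : ℕ} (K₁ : ℝ) (hK₁ : 0 < K₁)
    (a : ℕ → ℝ) (ha : ∀ t, a t ∈ Set.Icc (0 : ℝ) 1)
    (ha2 : Summable fun t => a t ^ 2)
    (X : ℕ → Ω → EuclideanSpace ℝ (Fin n × Fin m))
    (η : ℕ → Ω → ℝ)
    (hηmeas : ∀ t, Measurable (η t))
    (hηpos : ∀ t ω, 0 ≤ η t ω)
    (hηindep : iIndepFun η ℙ)
    (hηident : ∀ t, Measure.map (η t) (ℙ : Measure Ω) = Measure.map (η 0) ℙ)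
    (hηL2 : MemLp (η 0) 2 ℙ)
    (hrec : ∀ t : ℕ, 1 ≤ t → ∀ ω,
      ‖X (t + 1) ω‖ ≤ (1 + K₁ * a t) * ‖X t ω‖ + a t * η t ω) :
    ∃ (K : ℝ), 0 < K ∧ ∃ M : Ω → ℝ,
      ∀ᵐ ω ∂(ℙ : Measure Ω), 0 ≤ M ω ∧
        ∀ t : ℕ, 0 < t →
          ‖X (t + 1) ω‖ ≤ Real.exp (K * ∑ s ∈ Finset.Icc 1 t, a s) * (‖X 1 ω‖ + M ω) := by
  classical
  set A : ℕ → ℝ := fun t => ∑ s ∈ Finset.Icc 1 t, a s with hAdef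
  have hA0 : A 0 = 0 := by simp [hAdef]
  have hAsucc : ∀ t : ℕ, A (t + 1) = A t + a (t + 1) := by
    intro t
    simpa [hAdef] using Finset.sum_Icc_succ_top (a := 1) (b := t) (by omega) a
  have hanon : ∀ t, 0 ≤ a t := fun t => (ha t).1
  have hAnon : ∀ t, 0 ≤ A t := fun t => Finset.sum_nonneg fun s _ => hanon s
  set c : ℕ → ℝ := fun s => Real.exp K₁ * (a s * Real.exp (-(K₁ * A s))) with hcdef
  have hcnon : ∀ s, 0 ≤ c s := by
    intro s
    exact mul_nonneg (Real.exp_pos _).le (mul_nonneg (hanon s) (Real.exp_pos _).le)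
  -- telescoping bound on partial sums of the weights
  have htel : ∀ t : ℕ, K₁ * ∑ s ∈ Finset.Icc 1 t, (a s * Real.exp (-(K₁ * A s)))
      ≤ 1 - Real.exp (-(K₁ * A t)) := by
    intro t
    induction t with
    | zero => simp [hA0]
    | succ t ih =>
      rw [Finset.sum_Icc_succ_top (by omega)]
      have e2 : Real.exp (-(K₁ * A (t + 1))) * Real.exp (K₁ * a (t + 1))
          = Real.exp (-(K₁ * A t)) := by
        rw [← Real.exp_add]
        congr 1
        rw [hAsucc]
        ring
      have h1 : K₁ * a (t + 1) + 1 ≤ Real.exp (K₁ * a (t + 1)) :=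
        Real.add_one_le_exp _
      have key : 0 ≤ Real.exp (-(K₁ * A t)) - Real.exp (-(K₁ * A (t + 1)))
          - K₁ * a (t + 1) * Real.exp (-(K₁ * A (t + 1))) := by
        nlinarith [(Real.exp_pos (-(K₁ * A (t + 1)))).le]
      nlinarith [key, ih]
  -- the weights are summable
  have hcsum : Summable c := by
    apply summable_of_sum_range_le (c := c 0 + Real.exp K₁ * (1 / K₁)) hcnon
    intro nn
    have hsub : Finset.range nn ⊆ Finset.Icc 0 nn := by
      intro x hx
      simp only [Finset.mem_range] at hx
      simp only [Finset.mem_Icc]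
      omega
    have h1 : ∑ s ∈ Finset.range nn, c s ≤ ∑ s ∈ Finset.Icc 0 nn, c s :=
      Finset.sum_le_sum_of_subset_of_nonneg hsub (fun i _ _ => hcnon i)
    have h2 : Finset.Icc 0 nn = insert 0 (Finset.Icc 1 nn) := by
      ext x
      simp only [Finset.mem_Icc, Finset.mem_insert]
      omega
    have h3 : ∑ s ∈ Finset.Icc 0 nn, c s = c 0 + ∑ s ∈ Finset.Icc 1 nn, c s := by
      rw [h2, Finset.sum_insert (by simp)]
    have h4 : ∑ s ∈ Finset.Icc 1 nn, c s
        = Real.exp K₁ * ∑ s ∈ Finset.Icc 1 nn, (a s * Real.exp (-(K₁ * A s))) := by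
      rw [Finset.mul_sum]
    have h5 : ∑ s ∈ Finset.Icc 1 nn, (a s * Real.exp (-(K₁ * A s))) ≤ 1 / K₁ := by
      have := htel nn
      have hE : 0 ≤ Real.exp (-(K₁ * A nn)) := (Real.exp_pos _).le
      rw [le_div_iff₀ hK₁]
      nlinarith
    have h6 : ∑ s ∈ Finset.Icc 1 nn, c s ≤ Real.exp K₁ * (1 / K₁) := by
      rw [h4]
      exact mul_le_mul_of_nonneg_left h5 (Real.exp_pos _).le
    linarith
  -- the expected value of the weighted noise series is finite
  set g : ℕ → Ω → ENNReal := fun s ω => ENNReal.ofReal (c s * η s ω) with hgdef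
  have hgmeas : ∀ s, Measurable (g s) := fun s => ((hηmeas s).const_mul _).ennreal_ofReal
  have hC : ∫⁻ ω, ENNReal.ofReal (η 0 ω) ∂(ℙ : Measure Ω) < ⊤ := by
    have h1 : MemLp (η 0) 1 (ℙ : Measure Ω) :=
      hηL2.mono_exponent (by norm_num)
    have h2 : Integrable (η 0) (ℙ : Measure Ω) := memLp_one_iff_integrable.mp h1
    have h3 := h2.hasFiniteIntegral
    rw [HasFiniteIntegral] at h3
    refine lt_of_eq_of_lt ?_ h3
    apply lintegral_congr
    intro ω
    rw [← Real.enorm_eq_ofReal (hηpos 0 ω)]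
  have hint : ∀ s, ∫⁻ ω, g s ω ∂(ℙ : Measure Ω)
      = ENNReal.ofReal (c s) * ∫⁻ ω, ENNReal.ofReal (η 0 ω) ∂(ℙ : Measure Ω) := by
    intro s
    have h1 : ∀ ω, g s ω = ENNReal.ofReal (c s) * ENNReal.ofReal (η s ω) := fun ω =>
      ENNReal.ofReal_mul (hcnon s)
    simp only [h1]
    rw [lintegral_const_mul _ (hηmeas s).ennreal_ofReal]
    congr 1
    calc ∫⁻ ω, ENNReal.ofReal (η s ω) ∂(ℙ : Measure Ω)
        = ∫⁻ x, ENNReal.ofReal x ∂(Measure.map (η s) (ℙ : Measure Ω)) :=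
          (lintegral_map ENNReal.measurable_ofReal (hηmeas s)).symm
      _ = ∫⁻ x, ENNReal.ofReal x ∂(Measure.map (η 0) (ℙ : Measure Ω)) := by rw [hηident s]
      _ = ∫⁻ ω, ENNReal.ofReal (η 0 ω) ∂(ℙ : Measure Ω) :=
          lintegral_map ENNReal.measurable_ofReal (hηmeas 0)
  have htot : ∫⁻ ω, ∑' s, g s ω ∂(ℙ : Measure Ω) < ⊤ := by
    rw [lintegral_tsum (fun s => (hgmeas s).aemeasurable)]
    simp only [hint]
    rw [ENNReal.tsum_mul_right,
      ← ENNReal.ofReal_tsum_of_nonneg hcnon hcsum]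
    exact ENNReal.mul_lt_top ENNReal.ofReal_lt_top hC
  have hae : ∀ᵐ ω ∂(ℙ : Measure Ω), ∑' s, g s ω < ⊤ :=
    ae_lt_top (Measurable.ennreal_tsum hgmeas) htot.ne
  refine ⟨K₁, hK₁, fun ω => ∑' s, c s * η s ω, ?_⟩
  filter_upwards [hae] with ω hω
  have hfnon : ∀ s, 0 ≤ c s * η s ω := fun s => mul_nonneg (hcnon s) (hηpos s ω)
  have hfsum : Summable (fun s => c s * η s ω) := by
    have heq : (fun s => c s * η s ω) = fun s => (g s ω).toReal := by
      funext s
      rw [hgdef]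
      simp only
      rw [ENNReal.toReal_ofReal (hfnon s)]
    rw [heq]
    exact ENNReal.summable_toReal hω.ne
  refine ⟨tsum_nonneg hfnon, ?_⟩
  have main : ∀ t : ℕ, ‖X (t + 1) ω‖
      ≤ Real.exp (K₁ * A t) * (‖X 1 ω‖ + ∑ s ∈ Finset.Icc 1 t, c s * η s ω) := by
    intro t
    induction t with
    | zero => simp [hA0]
    | succ t ih =>
      have h1 := hrec (t + 1) (by omega) ω
      have hS : 0 ≤ ∑ s ∈ Finset.Icc 1 t, c s * η s ω :=
        Finset.sum_nonneg fun s _ => hfnon s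
      have hXn : 0 ≤ ‖X 1 ω‖ := norm_nonneg _
      have hexp1 : 1 + K₁ * a (t + 1) ≤ Real.exp (K₁ * a (t + 1)) := by
        have := Real.add_one_le_exp (K₁ * a (t + 1)); linarith
      have hnn : 0 ≤ 1 + K₁ * a (t + 1) := by
        have := mul_nonneg hK₁.le (hanon (t + 1)); linarith
      have hprod : Real.exp (K₁ * A (t + 1)) * Real.exp (-(K₁ * A (t + 1))) = 1 := by
        rw [← Real.exp_add]; simp
      have heq2 : Real.exp (K₁ * A (t + 1)) * (c (t + 1) * η (t + 1) ω)
          = Real.exp K₁ * (a (t + 1) * η (t + 1) ω) := by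
        rw [hcdef]
        simp only
        linear_combination (Real.exp K₁ * a (t + 1) * η (t + 1) ω) * hprod
      have h2 : a (t + 1) * η (t + 1) ω
          ≤ Real.exp (K₁ * A (t + 1)) * (c (t + 1) * η (t + 1) ω) := by
        rw [heq2]
        have h4 : 1 ≤ Real.exp K₁ := Real.one_le_exp hK₁.le
        exact le_mul_of_one_le_left (mul_nonneg (hanon _) (hηpos _ _)) h4
      have hstep : ‖X (t + 1 + 1) ω‖
          ≤ Real.exp (K₁ * a (t + 1)) * (Real.exp (K₁ * A t)
              * (‖X 1 ω‖ + ∑ s ∈ Finset.Icc 1 t, c s * η s ω))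
            + Real.exp (K₁ * A (t + 1)) * (c (t + 1) * η (t + 1) ω) := by
        have hb : (1 + K₁ * a (t + 1)) * ‖X (t + 1) ω‖
            ≤ (1 + K₁ * a (t + 1)) * (Real.exp (K₁ * A t)
              * (‖X 1 ω‖ + ∑ s ∈ Finset.Icc 1 t, c s * η s ω)) :=
          mul_le_mul_of_nonneg_left ih hnn
        have hc2 : (1 + K₁ * a (t + 1)) * (Real.exp (K₁ * A t)
              * (‖X 1 ω‖ + ∑ s ∈ Finset.Icc 1 t, c s * η s ω))
            ≤ Real.exp (K₁ * a (t + 1)) * (Real.exp (K₁ * A t)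
              * (‖X 1 ω‖ + ∑ s ∈ Finset.Icc 1 t, c s * η s ω)) := by
          apply mul_le_mul_of_nonneg_right hexp1
          exact mul_nonneg (Real.exp_pos _).le (by linarith)
        linarith
      have hmul : Real.exp (K₁ * a (t + 1)) * Real.exp (K₁ * A t)
          = Real.exp (K₁ * A (t + 1)) := by
        rw [← Real.exp_add]
        congr 1
        rw [hAsucc]
        ring
      calc ‖X (t + 1 + 1) ω‖
          ≤ Real.exp (K₁ * a (t + 1)) * (Real.exp (K₁ * A t)
              * (‖X 1 ω‖ + ∑ s ∈ Finset.Icc 1 t, c s * η s ω))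
            + Real.exp (K₁ * A (t + 1)) * (c (t + 1) * η (t + 1) ω) := hstep
        _ = Real.exp (K₁ * A (t + 1))
              * (‖X 1 ω‖ + (∑ s ∈ Finset.Icc 1 t, c s * η s ω + c (t + 1) * η (t + 1) ω)) := by
            rw [← hmul]; ring
        _ = Real.exp (K₁ * A (t + 1))
              * (‖X 1 ω‖ + ∑ s ∈ Finset.Icc 1 (t + 1), c s * η s ω) := by
            rw [Finset.sum_Icc_succ_top (by omega : 1 ≤ t + 1)]
  intro t _
  have hSM : ∑ s ∈ Finset.Icc 1 t, c s * η s ω ≤ ∑' s, c s * η s ω :=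
    Summable.sum_le_tsum _ (fun s _ => hfnon s) hfsum
  refine le_trans (main t) ?_
  apply mul_le_mul_of_nonneg_left _ (Real.exp_pos _).le
  linarith
end

section
/- Let λ ∈ (0,1], let b(t) ∈ [0,1] be a sequence with Σ_t b(t) = ∞, and let ε(t) be a real sequence with lim_{t→∞} ε(t) = 0. Then the sequence z(t) defined by the recursion z(t+1) = (1 − λ b(t))·z(t) + b(t)·ε(t+1) converges to 0 as t → ∞. -/
open Filter

/-- **Lemma (convergence of a perturbed contraction).** Let `0 < λ ≤ 1`, let
`b t ∈ [0,1]` with `∑ b t = ∞`, and let `ε t → 0`.  Then the sequence defined by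
`z (t+1) = (1 - λ b t) z t + b t ε (t+1)` converges to `0`. -/
theorem stmt_13 (lam : ℝ) (hlam0 : 0 < lam) (hlam1 : lam ≤ 1)
    (b eps z : ℕ → ℝ)
    (hb : ∀ t, b t ∈ Set.Icc (0 : ℝ) 1)
    (hbsum : Tendsto (fun n => ∑ t ∈ Finset.range n, b t) atTop atTop)
    (heps : Tendsto eps atTop (nhds 0))
    (hz : ∀ t, z (t + 1) = (1 - lam * b t) * z t + b t * eps (t + 1)) :
    Tendsto z atTop (nhds 0) := by
  rw [Metric.tendsto_atTop]
  intro δ hδ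
  obtain ⟨T, hT⟩ : ∃ T, ∀ t ≥ T, |eps t| ≤ lam * δ / 2 := by
    obtain ⟨T, hT⟩ := (Metric.tendsto_atTop.mp heps) (lam * δ / 2) (by positivity)
    exact ⟨T, fun t ht => by
      have := hT t ht
      rw [Real.dist_eq, sub_zero] at this
      linarith⟩
  set P : ℕ → ℝ := fun n => ∏ i ∈ Finset.range n, (1 - lam * b (T + i)) with hP
  have hfac : ∀ t, 0 ≤ 1 - lam * b t ∧ 1 - lam * b t ≤ 1 := by
    intro t
    obtain ⟨h0, h1⟩ := hb t
    constructor
    · nlinarith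
    · nlinarith
  have hPnonneg : ∀ n, 0 ≤ P n := fun n =>
    Finset.prod_nonneg fun i _ => (hfac (T + i)).1
  have key : ∀ n, |z (T + n)| ≤ δ / 2 + P n * |z T| := by
    intro n
    induction n with
    | zero => simp [hP]; linarith [abs_nonneg (z T)]
    | succ n ih =>
      have hrec := hz (T + n)
      have hb' := hb (T + n)
      have hf := hfac (T + n)
      have heb : |eps (T + n + 1)| ≤ lam * δ / 2 := hT _ (by omega)
      have habs : |z (T + n + 1)| ≤ (1 - lam * b (T + n)) * |z (T + n)|
          + b (T + n) * (lam * δ / 2) := by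
        rw [hrec]
        calc |(1 - lam * b (T + n)) * z (T + n) + b (T + n) * eps (T + n + 1)|
            ≤ |(1 - lam * b (T + n)) * z (T + n)| + |b (T + n) * eps (T + n + 1)| :=
              abs_add_le _ _
          _ = (1 - lam * b (T + n)) * |z (T + n)| + b (T + n) * |eps (T + n + 1)| := by
              rw [abs_mul, abs_mul, abs_of_nonneg hf.1, abs_of_nonneg hb'.1]
          _ ≤ (1 - lam * b (T + n)) * |z (T + n)| + b (T + n) * (lam * δ / 2) := by
              have := mul_le_mul_of_nonneg_left heb hb'.1
              linarith
      have hPsucc : P (n + 1) = (1 - lam * b (T + n)) * P n := by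
        rw [hP]
        simp [Finset.prod_range_succ, mul_comm]
      have h2 : (1 - lam * b (T + n)) * |z (T + n)| ≤
          (1 - lam * b (T + n)) * (δ / 2 + P n * |z T|) :=
        mul_le_mul_of_nonneg_left ih hf.1
      have : T + (n + 1) = T + n + 1 := by omega
      rw [this, hPsucc]
      have hbl := hb'.1
      nlinarith
  -- Product bound by exponential of partial sums
  have hPexp : ∀ n, P n ≤ Real.exp (-(lam * ∑ i ∈ Finset.range n, b (T + i))) := by
    intro n
    have : P n ≤ ∏ i ∈ Finset.range n, Real.exp (-(lam * b (T + i))) := by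
      apply Finset.prod_le_prod
      · intro i _; exact (hfac (T + i)).1
      · intro i _
        have := Real.add_one_le_exp (-(lam * b (T + i)))
        linarith
    calc P n ≤ ∏ i ∈ Finset.range n, Real.exp (-(lam * b (T + i))) := this
      _ = Real.exp (∑ i ∈ Finset.range n, -(lam * b (T + i))) := by
          rw [Real.exp_sum]
      _ = Real.exp (-(lam * ∑ i ∈ Finset.range n, b (T + i))) := by
          congr 1
          rw [Finset.mul_sum, ← Finset.sum_neg_distrib]
  -- Partial tail sums tend to infinity
  have hSsum : Tendsto (fun n => ∑ i ∈ Finset.range n, b (T + i)) atTop atTop := by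
    have hsplit : ∀ n, ∑ i ∈ Finset.range n, b (T + i)
        = (∑ t ∈ Finset.range (T + n), b t) - ∑ t ∈ Finset.range T, b t := by
      intro n
      rw [Finset.sum_range_add]
      ring
    simp only [hsplit]
    apply Tendsto.atTop_add _ tendsto_const_nhds
    exact by
      have := hbsum.comp (tendsto_add_atTop_nat T)
      simpa [Nat.add_comm, Function.comp_def] using this
  have hPto0 : Tendsto (fun n => Real.exp (-(lam * ∑ i ∈ Finset.range n, b (T + i))))
      atTop (nhds 0) := by
    apply Real.tendsto_exp_atBot.comp
    apply tendsto_neg_atTop_atBot.comp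
    exact hSsum.const_mul_atTop hlam0
  have hfin : Tendsto (fun n => Real.exp (-(lam * ∑ i ∈ Finset.range n, b (T + i))) * |z T|)
      atTop (nhds 0) := by
    simpa using hPto0.mul_const |z T|
  obtain ⟨n₀, hn₀⟩ := (Metric.tendsto_atTop.mp hfin) (δ / 2) (by positivity)
  refine ⟨T + n₀, fun t ht => ?_⟩
  set n := t - T with hn
  have htn : t = T + n := by omega
  have hnn : n ≥ n₀ := by omega
  have h1 := key n
  have h2 := hPexp n
  have h3 := hn₀ n hnn
  rw [Real.dist_eq, sub_zero] at h3
  have hexp_nonneg : 0 ≤ Real.exp (-(lam * ∑ i ∈ Finset.range n, b (T + i))) * |z T| := by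
    positivity
  rw [abs_of_nonneg hexp_nonneg] at h3
  have hPz : P n * |z T| ≤ Real.exp (-(lam * ∑ i ∈ Finset.range n, b (T + i))) * |z T| :=
    mul_le_mul_of_nonneg_right h2 (abs_nonneg _)
  rw [Real.dist_eq, sub_zero, htn]
  calc |z (T + n)| ≤ δ / 2 + P n * |z T| := h1
    _ < δ / 2 + δ / 2 := by linarith
    _ = δ := by ring
end

section
/- Let R be a random variable with 0 ≤ R ≤ M almost surely for a constant M > 0, let G be a sub-σ-algebra, and let S := E[R | G]. Then for every t with 0 ≤ t and t + 1 < M, one has P(S > t + 1) ≤ (M − t)·P(R > t). In particular, if M = aN for a constant a > 0, P(R > t) ≤ O(N^{−c₁}) for some c₁ > 1 and t = O(√ω), then P(S > t + 1) = o(1). -/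
open MeasureTheory ProbabilityTheory Filter Asymptotics

lemma aux_markov (Ω : Type) (_m : MeasurableSpace Ω) (P : Measure Ω) (hP : IsProbabilityMeasure P)
    (M : ℝ) (hM : 0 < M) (R : Ω → ℝ) (hR : Measurable R)
    (hbd : ∀ᵐ ω ∂P, R ω ∈ Set.Icc (0 : ℝ) M)
    (G : MeasurableSpace Ω) (hG : G ≤ _m)
    (t : ℝ) (ht : 0 ≤ t) (htM : t + 1 < M) :
    P {ω | t + 1 < (P[R | G]) ω} ≤ ENNReal.ofReal (M - t) * P {ω | t < R ω} := by
  haveI := hP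
  have hMt : (0:ℝ) ≤ M - t := by linarith
  set A : Set Ω := {ω | t < R ω} with hA_def
  have hA : MeasurableSet[_m] A := hR measurableSet_Ioi
  set f : Ω → ℝ := A.indicator (fun _ => 1) with hf_def
  have hf_int : Integrable f P := Integrable.indicator (μ := P) (s := A) (f := fun _ => (1:ℝ)) (integrable_const 1) hA
  have hR_int : Integrable R P := by
    refine (integrable_const M).mono' hR.aestronglyMeasurable ?_
    filter_upwards [hbd] with ω hω
    rw [Real.norm_eq_abs, abs_le]
    exact ⟨by linarith [hω.1], hω.2⟩
  set g : Ω → ℝ := (fun _ => t) + (M - t) • f with hg_def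
  have hg_int : Integrable g P := (integrable_const t).add (hf_int.smul (M - t))
  have hRg : R ≤ᵐ[P] g := by
    filter_upwards [hbd] with ω hω
    by_cases h : t < R ω
    · have : f ω = 1 := Set.indicator_of_mem (show ω ∈ A from h) _
      simp only [hg_def, Pi.add_apply, Pi.smul_apply, this, smul_eq_mul, mul_one]
      linarith [hω.2]
    · have : f ω = 0 := Set.indicator_of_notMem (show ω ∉ A from h) _
      simp only [hg_def, Pi.add_apply, Pi.smul_apply, this, smul_eq_mul, mul_zero]
      linarith [not_lt.mp h]
  have hcond : P[R|G] ≤ᵐ[P] P[g|G] := condExp_mono hR_int hg_int hRg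
  have h1 : P[g|G] =ᵐ[P] fun ω => t + (M - t) * (P[f|G]) ω := by
    refine (condExp_add (integrable_const t) (hf_int.smul (M - t)) G).trans ?_
    have h2 := condExp_smul (μ := P) (m := G) (M - t) f
    filter_upwards [h2] with ω hω
    simp only [Pi.add_apply, condExp_const hG, hω, Pi.smul_apply, smul_eq_mul]
  have hgnn : 0 ≤ᵐ[P] P[f|G] :=
    condExp_nonneg (ae_of_all _ fun ω => Set.indicator_nonneg (fun _ _ => zero_le_one) ω)
  set h : Ω → ℝ := fun ω => (M - t) * (P[f|G]) ω with hh_def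
  have hsub : P {ω | t + 1 < (P[R | G]) ω} ≤ P {ω | 1 ≤ h ω} := by
    refine measure_mono_ae ?_
    filter_upwards [hcond, h1] with ω h₁ h₂ hmem
    have : t + 1 < t + (M - t) * (P[f|G]) ω := by
      calc t + 1 < (P[R|G]) ω := hmem
        _ ≤ (P[g|G]) ω := h₁
        _ = _ := h₂
    show (1:ℝ) ≤ h ω
    simp only [hh_def]; linarith
  have hh_int : Integrable h P := integrable_condExp.const_mul (M - t)
  have hh_nn : 0 ≤ᵐ[P] h := by
    filter_upwards [hgnn] with ω hω
    exact mul_nonneg hMt hω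
  have markov := mul_meas_ge_le_integral_of_nonneg hh_nn hh_int 1
  rw [one_mul] at markov
  have hint : ∫ ω, h ω ∂P = (M - t) * (P A).toReal := by
    rw [integral_const_mul, integral_condExp hG (f := f), hf_def]
    exact congrArg (fun x => (M - t) * x) (@integral_indicator_one Ω _m P A hA)
  calc P {ω | t + 1 < (P[R | G]) ω} ≤ P {ω | 1 ≤ h ω} := hsub
    _ = ENNReal.ofReal ((P {ω | 1 ≤ h ω}).toReal) := (ENNReal.ofReal_toReal (measure_ne_top _ _)).symm
    _ ≤ ENNReal.ofReal ((M - t) * (P A).toReal) := by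
        exact ENNReal.ofReal_le_ofReal (by rw [← hint]; exact markov)
    _ = ENNReal.ofReal (M - t) * P A := by
        rw [ENNReal.ofReal_mul hMt, ENNReal.ofReal_toReal (measure_ne_top _ _)]

/-- **Markov-type bound for a conditional expectation, and its asymptotic consequence.**
(1) If `0 ≤ R ≤ M` a.s. and `S := E[R | G]`, then for `0 ≤ t` with `t + 1 < M`,
`P(S > t+1) ≤ (M - t) P(R > t)`.
(2) In particular, for a sequence of probability spaces, if `M = aN` for a constant
`a > 0`, `P(R_N > t_N) ≤ O(N^{-c₁})` for some `c₁ > 1`, and `t_N = O(√ω_N)`, then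
`P(S_N > t_N + 1) = o(1)`. -/
theorem stmt_16 :
    (∀ (Ω : Type) (_m : MeasurableSpace Ω) (P : Measure Ω), IsProbabilityMeasure P →
      ∀ (M : ℝ), 0 < M → ∀ (R : Ω → ℝ), Measurable R →
      (∀ᵐ ω ∂P, R ω ∈ Set.Icc (0 : ℝ) M) →
      ∀ (G : MeasurableSpace Ω), G ≤ _m →
      ∀ (t : ℝ), 0 ≤ t → t + 1 < M →
      P {ω | t + 1 < (P[R | G]) ω} ≤ ENNReal.ofReal (M - t) * P {ω | t < R ω})
    ∧
    (∀ (Ω : ℕ → Type) (_m : ∀ N, MeasurableSpace (Ω N)) (P : ∀ N, Measure (Ω N)),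
      (∀ N, IsProbabilityMeasure (P N)) →
      ∀ (a : ℝ), 0 < a → ∀ (c₁ : ℝ), 1 < c₁ →
      ∀ (R : ∀ N, Ω N → ℝ) (G : ∀ N, MeasurableSpace (Ω N)) (t w : ℕ → ℝ),
      (∀ N, Measurable (R N)) →
      (∀ N, G N ≤ _m N) →
      (∀ N : ℕ, ∀ᵐ ω ∂(P N), R N ω ∈ Set.Icc (0 : ℝ) (a * N)) →
      (∀ N, 0 ≤ t N) →
      (fun N => t N) =O[atTop] (fun N => Real.sqrt (w N)) →
      (∃ Cp : ℝ, ∀ N : ℕ, 0 < N →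
        ((P N) {ω | t N < R N ω}).toReal ≤ Cp * (N : ℝ) ^ (-c₁)) →
      Tendsto (fun N => (P N) {ω | t N + 1 < ((P N)[R N | G N]) ω}) atTop (nhds 0)) := by
  constructor
  · exact aux_markov
  · intro Ω _m P hP a ha c₁ hc₁ R G t w hRmeas hG hbd ht _hO hCpEx
    obtain ⟨Cp, hCp⟩ := hCpEx
    have hRmeas' : ∀ N, Measurable[_m N] (R N) := fun N => (hRmeas N).mono (hG N) le_rfl
    have key : ∀ N : ℕ, 0 < N → (P N) {ω | t N + 1 < ((P N)[R N | G N]) ω} ≤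
        ENNReal.ofReal (a * N * (Cp * (N : ℝ) ^ (-c₁))) := by
      intro N hN
      haveI := hP N
      have hNpos : (0:ℝ) < N := Nat.cast_pos.mpr hN
      have haN : (0:ℝ) < a * N := mul_pos ha hNpos
      by_cases hc : t N + 1 < a * N
      · have h1 := aux_markov (Ω N) (_m N) (P N) (hP N) (a * N) haN (R N) (hRmeas' N)
          (hbd N) (G N) (hG N) (t N) (ht N) hc
        have hCpnn : 0 ≤ Cp * (N : ℝ) ^ (-c₁) :=
          le_trans ENNReal.toReal_nonneg (hCp N hN)
        calc (P N) {ω | t N + 1 < ((P N)[R N | G N]) ω}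
            ≤ ENNReal.ofReal (a * N - t N) * (P N) {ω | t N < R N ω} := h1
          _ ≤ ENNReal.ofReal (a * N) * ENNReal.ofReal (Cp * (N : ℝ) ^ (-c₁)) := by
              refine mul_le_mul' (ENNReal.ofReal_le_ofReal (by linarith [ht N])) ?_
              rw [← ENNReal.ofReal_toReal (measure_ne_top (P N) _)]
              exact ENNReal.ofReal_le_ofReal (hCp N hN)
          _ = ENNReal.ofReal (a * N * (Cp * (N : ℝ) ^ (-c₁))) :=
              (ENNReal.ofReal_mul haN.le).symm
      · have hRint : Integrable (R N) (P N) := by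
          refine (integrable_const (a * N)).mono' (hRmeas' N).aestronglyMeasurable ?_
          filter_upwards [hbd N] with ω hω
          rw [Real.norm_eq_abs, abs_le]
          exact ⟨by linarith [hω.1, haN], hω.2⟩
        have h2 : (P N)[R N|G N] ≤ᵐ[P N] (P N)[(fun _ => a * N)|G N] :=
          condExp_mono hRint (integrable_const _) ((hbd N).mono fun ω hω => hω.2)
        rw [condExp_const (hG N)] at h2
        have hz : (P N) {ω | t N + 1 < ((P N)[R N | G N]) ω} = 0 := by
          refine measure_eq_zero_iff_ae_notMem.mpr ?_
          filter_upwards [h2] with ω hω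
          simp only [Set.mem_setOf_eq, not_lt]
          calc ((P N)[R N|G N]) ω ≤ a * N := hω
            _ ≤ t N + 1 := not_lt.mp hc
        rw [hz]
        exact zero_le
    have hlim : Tendsto (fun N : ℕ => ENNReal.ofReal (a * N * (Cp * (N : ℝ) ^ (-c₁))))
        atTop (nhds 0) := by
      rw [← ENNReal.ofReal_zero]
      apply ENNReal.tendsto_ofReal
      have heq : (fun N : ℕ => a * N * (Cp * (N : ℝ) ^ (-c₁)))
          = fun N : ℕ => (a * Cp) * (N : ℝ) ^ (1 - c₁) := by
        funext N
        rcases Nat.eq_zero_or_pos N with h0 | h0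
        · subst h0
          simp [Real.zero_rpow (by intro h; linarith : (1 - c₁) ≠ 0),
            Real.zero_rpow (by intro h; linarith [neg_eq_zero.mp h] : (-c₁) ≠ 0)]
        · have hNpos : (0:ℝ) < N := Nat.cast_pos.mpr h0
          rw [show (1 - c₁) = 1 + (-c₁) by ring, Real.rpow_add hNpos, Real.rpow_one]
          ring
      rw [heq]
      have h0 : Tendsto (fun N : ℕ => (N : ℝ) ^ (1 - c₁)) atTop (nhds 0) := by
        rw [show (1 - c₁) = -(c₁ - 1) by ring]
        exact (tendsto_rpow_neg_atTop (by linarith)).comp tendsto_natCast_atTop_atTop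
      simpa using h0.const_mul (a * Cp)
    refine tendsto_of_tendsto_of_tendsto_of_le_of_le' tendsto_const_nhds hlim
      (Eventually.of_forall fun N => zero_le) ?_
    filter_upwards [eventually_atTop.2 ⟨1, fun N hN => hN⟩] with N hN
    exact key N hN
end
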